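/- arXiv:1811.11633 — 4 statements merged into one kernel-verified Lean document; each statement's English description precedes it below -/
import Mathlib

section
/- For matrices L ∈ ℂ^{n×k} and R ∈ ℂ^{m×k}, the nuclear norm of LRᵀ satisfies ‖LRᵀ‖_* ≤ (1/2)(‖L‖_F² + ‖R‖_F²). -/
open Matrix

/-- Nuclear norm: sum of singular values (square roots of eigenvalues of MᴴM). -/
noncomputable def nuclearNorm {m k : ℕ} (M : Matrix (Fin m) (Fin k) ℂ) : ℝ :=
  ∑ i, Real.sqrt ((Matrix.isHermitian_conjTranspose_mul_self M).eigenvalues i)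

noncomputable def toE {N : ℕ} (x : Fin N → ℂ) : EuclideanSpace ℂ (Fin N) :=
  (WithLp.equiv 2 _).symm x

lemma inner_toE {N : ℕ} (x y : Fin N → ℂ) :
    (inner ℂ (toE x) (toE y) : ℂ) = dotProduct (star x) y := by
  simp [toE, PiLp.inner_apply, dotProduct, mul_comm]

lemma norm_sq_toE {N : ℕ} (x : Fin N → ℂ) : ‖toE x‖ ^ 2 = ∑ i, ‖x i‖ ^ 2 := by
  rw [EuclideanSpace.norm_eq]
  exact Real.sq_sqrt (by positivity)

lemma adj {N K : ℕ} (A : Matrix (Fin N) (Fin K) ℂ) (u : Fin N → ℂ) (w : Fin K → ℂ) :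
    (inner ℂ (toE u) (toE (A *ᵥ w)) : ℂ) = inner ℂ (toE (Aᴴ *ᵥ u)) (toE w) := by
  rw [inner_toE, inner_toE, dotProduct_mulVec, star_mulVec, conjTranspose_conjTranspose]

lemma bessel_mulVec {N K : ℕ} {ι : Type*} [Fintype ι]
    (A : Matrix (Fin N) (Fin K) ℂ) (u : ι → EuclideanSpace ℂ (Fin N))
    (hu : Orthonormal ℂ u) :
    ∑ i, ‖toE (Aᴴ *ᵥ (u i))‖ ^ 2 ≤ ∑ r, ∑ c, ‖A r c‖ ^ 2 := by
  have h1 : ∀ (i : ι) (c : Fin K),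
      (Aᴴ *ᵥ (u i)) c = inner ℂ (toE (fun r => A r c)) (u i) := by
    intro i c
    simp [inner_toE, mulVec, dotProduct, conjTranspose_apply, PiLp.inner_apply,
      RCLike.inner_apply, toE, mul_comm]
  calc ∑ i, ‖toE (Aᴴ *ᵥ (u i))‖ ^ 2
      = ∑ i, ∑ c, ‖(Aᴴ *ᵥ (u i)) c‖ ^ 2 := by
        simp only [norm_sq_toE]
    _ = ∑ c, ∑ i : ι, ‖(inner ℂ (u i) (toE (fun r => A r c)) : ℂ)‖ ^ 2 := by
        rw [Finset.sum_comm]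
        congr 1; ext c; congr 1; ext i
        rw [h1, ← norm_inner_symm]
    _ ≤ ∑ c, ‖toE (fun r => A r c)‖ ^ 2 := by
        refine Finset.sum_le_sum fun c _ => ?_
        exact hu.sum_inner_products_le _
    _ = ∑ c, ∑ r, ‖A r c‖ ^ 2 := by simp only [norm_sq_toE]
    _ = ∑ r, ∑ c, ‖A r c‖ ^ 2 := Finset.sum_comm

/-- ‖LRᵀ‖_* ≤ (1/2)(‖L‖_F² + ‖R‖_F²). -/
theorem nuclear_norm_factor_bound (n m k : ℕ)
    (L : Matrix (Fin n) (Fin k) ℂ) (R : Matrix (Fin m) (Fin k) ℂ) :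
    nuclearNorm (L * Rᵀ) ≤
      (1 / 2) * ((∑ i, ∑ j, ‖L i j‖ ^ 2) + ∑ i, ∑ j, ‖R i j‖ ^ 2) := by
  classical
  set M : Matrix (Fin n) (Fin m) ℂ := L * Rᵀ with hMdef
  have hA : (Mᴴ * M).IsHermitian := Matrix.isHermitian_conjTranspose_mul_self M
  set μ : Fin m → ℝ := hA.eigenvalues with hmu
  have hnn : nuclearNorm M = ∑ i, Real.sqrt (μ i) := rfl
  have hμ0 : ∀ i, 0 ≤ μ i := fun i => Matrix.eigenvalues_conjTranspose_mul_self_nonneg M i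
  set v : Fin m → EuclideanSpace ℂ (Fin m) := fun i => hA.eigenvectorBasis i with hvdef
  have hv : Orthonormal ℂ v := hA.eigenvectorBasis.orthonormal
  have hvec : ∀ i, (Mᴴ * M) *ᵥ (v i) = (μ i : ℂ) • (v i : EuclideanSpace ℂ (Fin m)) := by
    intro i
    have := hA.mulVec_eigenvectorBasis i
    rw [RCLike.real_smul_eq_coe_smul (K := ℂ)] at this
    exact this
  -- key inner product identity
  have key : ∀ i j, (inner ℂ (toE (M *ᵥ v i)) (toE (M *ᵥ v j)) : ℂ)
      = (μ i : ℂ) * inner ℂ (v i) (v j) := by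
    intro i j
    have h1 := adj M (M *ᵥ v i) (v j)
    rw [mulVec_mulVec, hvec i] at h1
    have h2 : toE ((μ i : ℂ) • (v i : Fin m → ℂ)) = (μ i : ℂ) • v i := rfl
    have h3 : toE (v j : Fin m → ℂ) = v j := rfl
    rw [h2, h3, inner_smul_left] at h1
    rw [h1]
    simp
  set σ : Fin m → ℝ := fun i => Real.sqrt (μ i) with hsdef
  have hσ0 : ∀ i, 0 ≤ σ i := fun i => Real.sqrt_nonneg _
  have hσsq : ∀ i, σ i ^ 2 = μ i := fun i => Real.sq_sqrt (hμ0 i)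
  have hv1 : ∀ i, (inner ℂ (v i) (v i) : ℂ) = 1 := by
    intro i
    rw [inner_self_eq_norm_sq_to_K, hv.1 i]
    norm_num
  have hnorm : ∀ i, ‖toE (M *ᵥ v i)‖ = σ i := by
    intro i
    have h1 : (‖toE (M *ᵥ v i)‖ ^ 2 : ℝ) = μ i := by
      have h := key i i
      rw [hv1 i, mul_one, inner_self_eq_norm_sq_to_K] at h
      rw [← RCLike.ofReal_pow] at h
      exact RCLike.ofReal_inj.mp h
    calc ‖toE (M *ᵥ v i)‖ = Real.sqrt (‖toE (M *ᵥ v i)‖ ^ 2) :=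
          (Real.sqrt_sq (norm_nonneg _)).symm
      _ = σ i := by rw [h1]
  let ι := {i : Fin m // μ i ≠ 0}
  let u : ι → EuclideanSpace ℂ (Fin n) := fun i => ((σ i.1 : ℂ))⁻¹ • toE (M *ᵥ v i.1)
  have hσne : ∀ i : ι, σ i.1 ≠ 0 := fun i =>
    ne_of_gt (Real.sqrt_pos.mpr (lt_of_le_of_ne (hμ0 _) (Ne.symm i.2)))
  have hu : Orthonormal ℂ u := by
    rw [orthonormal_iff_ite]
    intro i j
    have hij : (inner ℂ (u i) (u j) : ℂ)
        = (σ i.1 : ℂ)⁻¹ * ((σ j.1 : ℂ)⁻¹ * ((μ i.1 : ℂ) * inner ℂ (v i.1) (v j.1))) := by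
      simp only [u, inner_smul_left, inner_smul_right, key, map_inv₀, Complex.conj_ofReal]
      ring
    by_cases h : i = j
    · subst h
      rw [if_pos rfl, hij, hv1 i.1, mul_one]
      have hz : (σ i.1 : ℂ) ≠ 0 := by exact_mod_cast hσne i
      have hms : ((μ i.1 : ℝ) : ℂ) = (σ i.1 : ℂ) * (σ i.1 : ℂ) := by
        rw [← hσsq i.1]; push_cast; ring
      rw [hms]
      field_simp
    · rw [if_neg h, hij, hv.2 (fun hval => h (Subtype.ext hval)), mul_zero, mul_zero, mul_zero]
  have hpt : ∀ i : ι, σ i.1 ≤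
      (1/2) * (‖toE (Lᴴ *ᵥ (u i))‖ ^ 2 + ‖toE (Rᵀ *ᵥ v i.1)‖ ^ 2) := by
    intro i
    have h1 : (inner ℂ (u i) (toE (M *ᵥ v i.1)) : ℂ) = (σ i.1 : ℂ) := by
      simp only [u, inner_smul_left, map_inv₀, Complex.conj_ofReal]
      rw [inner_self_eq_norm_sq_to_K, hnorm i.1]
      have hz : (σ i.1 : ℂ) ≠ 0 := by exact_mod_cast hσne i
      field_simp
      ring_nf
      rfl
    have h2 : (inner ℂ (u i) (toE (M *ᵥ v i.1)) : ℂ)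
        = inner ℂ (toE (Lᴴ *ᵥ (u i))) (toE (Rᵀ *ᵥ v i.1)) := by
      have hw : M *ᵥ (v i.1) = L *ᵥ (Rᵀ *ᵥ (v i.1)) := (mulVec_mulVec _ _ _).symm
      rw [hw]
      exact adj L (u i) (Rᵀ *ᵥ (v i.1))
    have h3 : σ i.1 ≤ ‖toE (Lᴴ *ᵥ (u i))‖ * ‖toE (Rᵀ *ᵥ v i.1)‖ := by
      have h4 := norm_inner_le_norm (𝕜 := ℂ) (toE (Lᴴ *ᵥ (u i))) (toE (Rᵀ *ᵥ v i.1))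
      rw [← h2, h1] at h4
      simpa [Complex.norm_real, abs_of_nonneg (hσ0 i.1)] using h4
    nlinarith [sq_nonneg (‖toE (Lᴴ *ᵥ (u i))‖ - ‖toE (Rᵀ *ᵥ v i.1)‖)]
  set S : Finset (Fin m) := Finset.univ.filter (fun i => μ i ≠ 0) with hS
  have hmem : ∀ i, i ∈ S ↔ μ i ≠ 0 := by intro i; simp [hS]
  have e1 : ∑ i, σ i = ∑ i ∈ S, σ i := by
    refine (Finset.sum_subset (Finset.subset_univ S) ?_).symm
    intro x _ hx
    have hx0 : μ x = 0 := by by_contra h; exact hx ((hmem x).mpr h)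
    simp [hsdef, hx0]
  have e2 : ∑ i ∈ S, σ i = ∑ i : ι, σ i.1 := Finset.sum_subtype S hmem _
  have bL : ∑ i : ι, ‖toE (Lᴴ *ᵥ (u i))‖ ^ 2 ≤ ∑ i, ∑ j, ‖L i j‖ ^ 2 :=
    bessel_mulVec L u hu
  have bR0 : ∑ i : Fin m, ‖toE (Rᵀ *ᵥ v i)‖ ^ 2 ≤ ∑ i, ∑ j, ‖R i j‖ ^ 2 := by
    have hconj : (R.map (starRingEnd ℂ))ᴴ = Rᵀ := by
      ext c j
      simp [conjTranspose_apply, map_apply]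
    have h := bessel_mulVec (R.map (starRingEnd ℂ)) v hv
    rw [hconj] at h
    calc ∑ i : Fin m, ‖toE (Rᵀ *ᵥ v i)‖ ^ 2
        ≤ ∑ r, ∑ c, ‖(R.map (starRingEnd ℂ)) r c‖ ^ 2 := h
      _ = ∑ i, ∑ j, ‖R i j‖ ^ 2 := by simp [map_apply]
  have bR' : ∑ i : ι, ‖toE (Rᵀ *ᵥ v i.1)‖ ^ 2 ≤ ∑ i : Fin m, ‖toE (Rᵀ *ᵥ v i)‖ ^ 2 := by
    rw [← Finset.sum_subtype S hmem (fun i => ‖toE (Rᵀ *ᵥ v i)‖ ^ 2)]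
    exact Finset.sum_le_sum_of_subset_of_nonneg (Finset.subset_univ S)
      (fun i _ _ => by positivity)
  have bR : ∑ i : ι, ‖toE (Rᵀ *ᵥ v i.1)‖ ^ 2 ≤ ∑ i, ∑ j, ‖R i j‖ ^ 2 := bR'.trans bR0
  rw [hnn]
  show ∑ i, σ i ≤ _
  rw [e1, e2]
  calc ∑ i : ι, σ i.1
      ≤ ∑ i : ι, (1/2) * (‖toE (Lᴴ *ᵥ (u i))‖ ^ 2 + ‖toE (Rᵀ *ᵥ v i.1)‖ ^ 2) :=
        Finset.sum_le_sum fun i _ => hpt i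
    _ = (1/2) * ((∑ i : ι, ‖toE (Lᴴ *ᵥ (u i))‖ ^ 2) + ∑ i : ι, ‖toE (Rᵀ *ᵥ v i.1)‖ ^ 2) := by
        rw [← Finset.mul_sum, Finset.sum_add_distrib]
    _ ≤ (1/2) * ((∑ i, ∑ j, ‖L i j‖ ^ 2) + ∑ i, ∑ j, ‖R i j‖ ^ 2) := by
        have h12 : (0:ℝ) ≤ 1/2 := by norm_num
        nlinarith [bL, bR]
end

section
/- For the partial-minimization value function Q̃(w) = min_x [ (1/(2η₁))‖Cx − w₁‖² + (1/(2η₂))‖w₂ − Ax + b‖² ] with w = (w₁, w₂), if the joint objective has a minimizer in x for every w, then Q̃ is differentiable with gradient Lipschitz constant at most max(1/η₁, 1/η₂). -/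
open RealInnerProductSpace

/-- Convexity of the squared norm along a segment. -/
lemma normsq_segment_le {F : Type*} [NormedAddCommGroup F] [NormedSpace ℝ F]
    (p q : F) {t : ℝ} (h0 : 0 ≤ t) (h1 : t ≤ 1) :
    ‖p + t • (q - p)‖ ^ 2 ≤ (1 - t) * ‖p‖ ^ 2 + t * ‖q‖ ^ 2 := by
  have key : ‖p + t • (q - p)‖ ≤ (1 - t) * ‖p‖ + t * ‖q‖ := by
    have : p + t • (q - p) = (1 - t) • p + t • q := by
      rw [sub_smul, smul_sub, one_smul]; abel
    rw [this]
    calc ‖(1 - t) • p + t • q‖ ≤ ‖(1 - t) • p‖ + ‖t • q‖ := norm_add_le _ _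
      _ = (1 - t) * ‖p‖ + t * ‖q‖ := by
          rw [norm_smul, norm_smul, Real.norm_eq_abs, Real.norm_eq_abs,
            abs_of_nonneg (by linarith), abs_of_nonneg h0]
  have hnn : (0:ℝ) ≤ ‖p + t • (q - p)‖ := norm_nonneg _
  nlinarith [norm_nonneg p, norm_nonneg q, sq_nonneg (‖p‖ - ‖q‖),
    mul_nonneg h0 (sub_nonneg.2 h1)]

/-- Abstract smoothness criterion: a function with a quadratic upper descent bound
relative to a candidate gradient field, which is also convex, is differentiable with
`L`-Lipschitz gradient `g`. -/
lemma smooth_of_quadratic_bounds {F : Type*} [NormedAddCommGroup F]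
    [InnerProductSpace ℝ F] [CompleteSpace F] (f : F → ℝ) (g : F → F) (L : ℝ) (hL : 0 < L)
    (hdesc : ∀ u v, f v ≤ f u + ⟪g u, v - u⟫ + L / 2 * ‖v - u‖ ^ 2)
    (hconv : ∀ u v (t : ℝ), 0 ≤ t → t ≤ 1 →
      f (u + t • (v - u)) ≤ (1 - t) * f u + t * f v) :
    (∀ x, HasGradientAt f (g x) x) ∧ ∀ u v, ‖g v - g u‖ ≤ L * ‖v - u‖ := by
  -- lower quadratic bound
  have hlow : ∀ u δ, f u + ⟪g u, δ⟫ - L / 2 * ‖δ‖ ^ 2 ≤ f (u + δ) := by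
    intro u δ
    have hm := hconv (u - δ) (u + δ) (1/2) (by norm_num) (by norm_num)
    have he : (u - δ) + (1/2 : ℝ) • ((u + δ) - (u - δ)) = u := by
      have : (u + δ) - (u - δ) = (2:ℝ) • δ := by
        rw [two_smul]; abel
      rw [this, smul_smul]; norm_num
    rw [he] at hm
    have hd := hdesc u (u - δ)
    have he2 : (u - δ) - u = -δ := by abel
    rw [he2, inner_neg_right, norm_neg] at hd
    linarith
  have htwo : ∀ u δ, |f (u + δ) - f u - ⟪g u, δ⟫| ≤ L / 2 * ‖δ‖ ^ 2 := by
    intro u δ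
    have h1 := hdesc u (u + δ)
    have he : (u + δ) - u = δ := by abel
    rw [he] at h1
    have h2 := hlow u δ
    rw [abs_le]; constructor <;> linarith
  have hgrad : ∀ x, HasGradientAt f (g x) x := by
    intro x
    rw [hasGradientAt_iff_isLittleO]
    rw [Asymptotics.isLittleO_iff]
    intro ε hε
    rw [Metric.eventually_nhds_iff]
    refine ⟨2 * ε / L, by positivity, fun y hy => ?_⟩
    have hb := htwo x (y - x)
    have he : x + (y - x) = y := by abel
    rw [he] at hb
    rw [Real.norm_eq_abs]
    calc |f y - f x - ⟪g x, y - x⟫| ≤ L / 2 * ‖y - x‖ ^ 2 := hb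
      _ = L / 2 * ‖y - x‖ * ‖y - x‖ := by ring
      _ ≤ L / 2 * (2 * ε / L) * ‖y - x‖ := by
          have : ‖y - x‖ ≤ 2 * ε / L := by
            rw [dist_eq_norm] at hy; exact le_of_lt hy
          have := mul_le_mul_of_nonneg_right
            (mul_le_mul_of_nonneg_left this (by positivity : (0:ℝ) ≤ L / 2))
            (norm_nonneg (y - x))
          linarith
      _ = ε * ‖y - x‖ := by field_simp
  refine ⟨hgrad, ?_⟩
  -- subgradient inequality
  have hsub : ∀ u v, f u + ⟪g u, v - u⟫ ≤ f v := by
    intro u v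
    refine le_of_forall_pos_le_add fun ε hε => ?_
    set M : ℝ := L / 2 * ‖v - u‖ ^ 2 with hM
    have hMnn : 0 ≤ M := by positivity
    set t : ℝ := min 1 (ε / (M + 1)) with ht
    have ht0 : 0 < t := lt_min one_pos (by positivity)
    have ht1 : t ≤ 1 := min_le_left _ _
    have hc := hconv u v t (le_of_lt ht0) ht1
    have hl := hlow u (t • (v - u))
    rw [inner_smul_right, norm_smul, Real.norm_eq_abs, abs_of_nonneg (le_of_lt ht0),
      mul_pow] at hl
    -- combine: f u + t⟪g u, v-u⟫ - L/2 t² ‖v-u‖² ≤ (1-t) f u + t f v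
    have hcomb : t * ⟪g u, v - u⟫ - L / 2 * (t ^ 2 * ‖v - u‖ ^ 2) ≤ t * (f v - f u) := by
      nlinarith [hl.trans hc]
    have hdiv : ⟪g u, v - u⟫ - t * M ≤ f v - f u := by
      have := (div_le_div_iff_of_pos_right ht0).2 hcomb
      have h' : t * ⟪g u, v - u⟫ / t = ⟪g u, v - u⟫ := by field_simp
      have h'' : t * (f v - f u) / t = f v - f u := by field_simp
      rw [h''] at this
      have h3 : (t * ⟪g u, v - u⟫ - L / 2 * (t ^ 2 * ‖v - u‖ ^ 2)) / t
          = ⟪g u, v - u⟫ - t * M := by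
        field_simp; ring
      rw [h3] at this; exact this
    have htM : t * M ≤ ε := by
      have h4 : t ≤ ε / (M + 1) := min_le_right _ _
      calc t * M ≤ ε / (M + 1) * M := mul_le_mul_of_nonneg_right h4 hMnn
        _ ≤ ε := by
            rw [div_mul_eq_mul_div, div_le_iff₀ (by positivity)]
            nlinarith
    linarith
  -- cocoercivity
  have hcoco : ∀ u v, f u + ⟪g u, v - u⟫ + 1 / (2 * L) * ‖g v - g u‖ ^ 2 ≤ f v := by
    intro u v
    set z : F := v - (1 / L) • (g v - g u) with hz
    have h1 := hsub u z
    have h2 := hdesc v z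
    have hzv : z - v = -((1/L) • (g v - g u)) := by rw [hz]; abel
    rw [hzv, inner_neg_right, inner_smul_right, norm_neg, norm_smul, Real.norm_eq_abs,
      abs_of_nonneg (by positivity : (0:ℝ) ≤ 1/L), mul_pow] at h2
    have hzu : z - u = (v - u) - (1/L) • (g v - g u) := by rw [hz]; abel
    rw [hzu, inner_sub_right, inner_smul_right] at h1
    have hip : ⟪g u, g v - g u⟫ = ⟪g v, g v - g u⟫ - ‖g v - g u‖ ^ 2 := by
      have hns := real_inner_self_eq_norm_sq (g v - g u)
      rw [inner_sub_left] at hns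
      linarith
    have hip' : 1/L * ⟪g u, g v - g u⟫
        = 1/L * ⟪g v, g v - g u⟫ - 1/L * ‖g v - g u‖ ^ 2 := by rw [hip]; ring
    have hL' : (1:ℝ)/L * ‖g v - g u‖^2 - L/2 * ((1/L)^2 * ‖g v - g u‖^2)
        = 1/(2*L) * ‖g v - g u‖^2 := by field_simp; ring
    linarith [h1, h2, hip', hL']
  intro u v
  have h1 := hcoco u v
  have h2 := hcoco v u
  have hsum : 1 / L * ‖g v - g u‖ ^ 2 ≤ ⟪g v - g u, v - u⟫ := by
    have huv : (u - v) = -(v - u) := by abel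
    have hgg : ‖g u - g v‖ = ‖g v - g u‖ := by rw [← norm_neg]; congr 1; abel
    rw [huv, inner_neg_right, hgg] at h2
    have : ⟪g v - g u, v - u⟫ = ⟪g v, v - u⟫ - ⟪g u, v - u⟫ := by
      rw [inner_sub_left]
    have hc : 1/(2*L)*‖g v - g u‖^2 + 1/(2*L)*‖g v - g u‖^2 = 1/L*‖g v - g u‖^2 := by
      field_simp; ring
    linarith [h1, h2, this, hc]
  have hcs : ⟪g v - g u, v - u⟫ ≤ ‖g v - g u‖ * ‖v - u‖ := real_inner_le_norm _ _
  rcases eq_or_lt_of_le (norm_nonneg (g v - g u)) with h | h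
  · rw [← h]; positivity
  · have : 1 / L * ‖g v - g u‖ ^ 2 ≤ ‖g v - g u‖ * ‖v - u‖ := le_trans hsum hcs
    rw [div_mul_eq_mul_div, div_le_iff₀ (by positivity)] at this
    have := this
    nlinarith

section

variable {E1 E2 : Type*} [NormedAddCommGroup E1] [InnerProductSpace ℝ E1]
  [NormedAddCommGroup E2] [InnerProductSpace ℝ E2]

/-- Exact quadratic expansion bound for the function `w ↦ c₁‖a₁-w₁‖² + c₂‖w₂-a₂‖²`. -/
lemma quad_expand {η₁ η₂ : ℝ} (h1 : 0 < η₁) (h2 : 0 < η₂) (a1 : E1) (a2 : E2)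
    (u v : WithLp 2 (E1 × E2)) :
    1 / (2 * η₁) * ‖a1 - v.fst‖ ^ 2 + 1 / (2 * η₂) * ‖v.snd - a2‖ ^ 2 ≤
      1 / (2 * η₁) * ‖a1 - u.fst‖ ^ 2 + 1 / (2 * η₂) * ‖u.snd - a2‖ ^ 2
      + ⟪(WithLp.equiv 2 (E1 × E2)).symm
          ((1 / η₁) • (u.fst - a1), (1 / η₂) • (u.snd - a2)), v - u⟫
      + max (1 / η₁) (1 / η₂) / 2 * ‖v - u‖ ^ 2 := by
  have hfst : (v - u).fst = v.fst - u.fst := rfl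
  have hsnd : (v - u).snd = v.snd - u.snd := rfl
  have hnorm := WithLp.prod_norm_sq_eq_of_L2 (v - u)
  rw [hfst, hsnd] at hnorm
  have hinner : ⟪(WithLp.equiv 2 (E1 × E2)).symm
        ((1 / η₁) • (u.fst - a1), (1 / η₂) • (u.snd - a2)), v - u⟫
      = (1 / η₁) * ⟪u.fst - a1, v.fst - u.fst⟫
        + (1 / η₂) * ⟪u.snd - a2, v.snd - u.snd⟫ := by
    simp only [WithLp.prod_inner_apply, WithLp.equiv_symm_apply, WithLp.ofLp_toLp, WithLp.ofLp_fst, WithLp.ofLp_snd]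
    rw [hfst, hsnd,
      real_inner_smul_left, real_inner_smul_left]
  rw [hinner, hnorm]
  have e1 : a1 - v.fst = (a1 - u.fst) - (v.fst - u.fst) := by abel
  have e2 : v.snd - a2 = (u.snd - a2) + (v.snd - u.snd) := by abel
  rw [e1, e2, norm_sub_sq_real, norm_add_sq_real]
  have hi1 : ⟪u.fst - a1, v.fst - u.fst⟫ = -⟪a1 - u.fst, v.fst - u.fst⟫ := by
    rw [← inner_neg_left]; congr 1; abel
  rw [hi1]
  have hL1 : 1 / η₁ ≤ max (1 / η₁) (1 / η₂) := le_max_left _ _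
  have hL2 : 1 / η₂ ≤ max (1 / η₁) (1 / η₂) := le_max_right _ _
  have k1 : 1 / (2 * η₁) * ‖v.fst - u.fst‖ ^ 2
      ≤ max (1 / η₁) (1 / η₂) / 2 * ‖v.fst - u.fst‖ ^ 2 := by
    apply mul_le_mul_of_nonneg_right _ (by positivity)
    rw [div_le_div_iff₀ (by positivity) (by norm_num)]
    rw [div_le_iff₀ (by positivity)] at hL1
    nlinarith
  have k2 : 1 / (2 * η₂) * ‖v.snd - u.snd‖ ^ 2
      ≤ max (1 / η₁) (1 / η₂) / 2 * ‖v.snd - u.snd‖ ^ 2 := by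
    apply mul_le_mul_of_nonneg_right _ (by positivity)
    rw [div_le_div_iff₀ (by positivity) (by norm_num)]
    rw [div_le_iff₀ (by positivity)] at hL2
    nlinarith
  have q1 : 1 / (2 * η₁) * (2 * ⟪a1 - u.fst, v.fst - u.fst⟫)
      = 1 / η₁ * ⟪a1 - u.fst, v.fst - u.fst⟫ := by
    field_simp
  have q2 : 1 / (2 * η₂) * (2 * ⟪u.snd - a2, v.snd - u.snd⟫)
      = 1 / η₂ * ⟪u.snd - a2, v.snd - u.snd⟫ := by
    field_simp
  nlinarith [k1, k2, q1, q2]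

end

/-- The partial-minimization value function Q̃ is differentiable with
gradient Lipschitz constant at most max(1/η₁, 1/η₂). -/
theorem value_function_smooth (n c d : ℕ)
    (C : EuclideanSpace ℝ (Fin n) →L[ℝ] EuclideanSpace ℝ (Fin c))
    (A : EuclideanSpace ℝ (Fin n) →L[ℝ] EuclideanSpace ℝ (Fin d))
    (b : EuclideanSpace ℝ (Fin d)) (η₁ η₂ : ℝ) (h1 : 0 < η₁) (h2 : 0 < η₂)
    (Q : EuclideanSpace ℝ (Fin n) →
      WithLp 2 (EuclideanSpace ℝ (Fin c) × EuclideanSpace ℝ (Fin d)) → ℝ)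
    (hQ : Q = fun x w =>
      (1 / (2 * η₁)) * ‖C x - (WithLp.equiv 2 _ w).1‖ ^ 2 +
        (1 / (2 * η₂)) * ‖(WithLp.equiv 2 _ w).2 - A x + b‖ ^ 2)
    (xw : WithLp 2 (EuclideanSpace ℝ (Fin c) × EuclideanSpace ℝ (Fin d)) →
      EuclideanSpace ℝ (Fin n))
    (hmin : ∀ w, IsLeast (Set.range fun x => Q x w) (Q (xw w) w))
    (Qt : WithLp 2 (EuclideanSpace ℝ (Fin c) × EuclideanSpace ℝ (Fin d)) → ℝ)
    (hQt : Qt = fun w => Q (xw w) w) :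
    Differentiable ℝ Qt ∧
      LipschitzWith (Real.toNNReal (max (1 / η₁) (1 / η₂))) (gradient Qt) := by
  have hL : (0:ℝ) < max (1 / η₁) (1 / η₂) := lt_max_of_lt_left (by positivity)
  set g : WithLp 2 (EuclideanSpace ℝ (Fin c) × EuclideanSpace ℝ (Fin d)) →
      WithLp 2 (EuclideanSpace ℝ (Fin c) × EuclideanSpace ℝ (Fin d)) := fun u =>
    (WithLp.equiv 2 _).symm
      ((1 / η₁) • (u.fst - C (xw u)), (1 / η₂) • (u.snd - (A (xw u) - b))) with hg
  have hdesc : ∀ u v, Qt v ≤ Qt u + ⟪g u, v - u⟫ + max (1 / η₁) (1 / η₂) / 2 * ‖v - u‖ ^ 2 := by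
    intro u v
    have hle : Q (xw v) v ≤ Q (xw u) v := (hmin v).2 ⟨xw u, rfl⟩
    simp only [hQt]
    refine le_trans hle ?_
    simp only [hQ, hg, WithLp.equiv_apply, WithLp.ofLp_fst, WithLp.ofLp_snd]
    have key := quad_expand h1 h2 (C (xw u)) (A (xw u) - b) u v
    rw [sub_add, sub_add]
    convert key using 3
  have hconv : ∀ u v (t : ℝ), 0 ≤ t → t ≤ 1 →
      Qt (u + t • (v - u)) ≤ (1 - t) * Qt u + t * Qt v := by
    intro u v t ht0 ht1
    have hle : Q (xw (u + t • (v - u))) (u + t • (v - u))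
        ≤ Q (xw u + t • (xw v - xw u)) (u + t • (v - u)) := (hmin _).2 ⟨_, rfl⟩
    simp only [hQt]
    refine le_trans hle ?_
    simp only [hQ, WithLp.equiv_apply, WithLp.ofLp_fst, WithLp.ofLp_snd]
    have c1 : C (xw u + t • (xw v - xw u)) - (u + t • (v - u)).fst
        = (C (xw u) - u.fst) + t • ((C (xw v) - v.fst) - (C (xw u) - u.fst)) := by
      have hf : (u + t • (v - u)).fst = u.fst + t • (v.fst - u.fst) := rfl
      rw [hf, map_add, map_smul, map_sub]
      module
    have c2 : (u + t • (v - u)).snd - A (xw u + t • (xw v - xw u)) + b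
        = (u.snd - A (xw u) + b)
          + t • ((v.snd - A (xw v) + b) - (u.snd - A (xw u) + b)) := by
      have hs : (u + t • (v - u)).snd = u.snd + t • (v.snd - u.snd) := rfl
      rw [hs, map_add, map_smul, map_sub]
      module
    rw [c1, c2]
    have k1 := normsq_segment_le (C (xw u) - u.fst) (C (xw v) - v.fst) ht0 ht1
    have k2 := normsq_segment_le (u.snd - A (xw u) + b) (v.snd - A (xw v) + b) ht0 ht1
    have m1 := mul_le_mul_of_nonneg_left k1 (by positivity : (0:ℝ) ≤ 1 / (2 * η₁))
    have m2 := mul_le_mul_of_nonneg_left k2 (by positivity : (0:ℝ) ≤ 1 / (2 * η₂))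
    nlinarith [m1, m2]
  obtain ⟨hgrad, hlip⟩ := smooth_of_quadratic_bounds Qt g _ hL hdesc hconv
  constructor
  · exact fun x => (hgrad x).differentiableAt
  · have hge : gradient Qt = g := funext fun x => (hgrad x).gradient
    rw [hge]
    apply LipschitzWith.of_dist_le_mul
    intro x y
    rw [Real.coe_toNNReal _ hL.le, dist_eq_norm, dist_eq_norm]
    exact hlip y x
end

section
/- Gradient formula for a least-squares value function: with x(w) = H⁻¹((1/η₁)Cᵀw₁ + (1/η₂)Aᵀ(w₂ + b)) and Q̃(w) = (1/(2η₁))‖C x(w) − w₁‖² + (1/(2η₂))‖w₂ − A x(w) + b‖², the gradient of Q̃ is ∇_{w₁}Q̃ = (1/η₁)(w₁ − C x(w)) and ∇_{w₂}Q̃ = (1/η₂)(w₂ − (A x(w) − b)). -/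
open ContinuousLinearMap

set_option maxHeartbeats 1000000 in
/-- Gradient formula for the least-squares value function. -/
theorem value_function_gradient (n c d : ℕ)
    (C : EuclideanSpace ℝ (Fin n) →L[ℝ] EuclideanSpace ℝ (Fin c))
    (A : EuclideanSpace ℝ (Fin n) →L[ℝ] EuclideanSpace ℝ (Fin d))
    (b : EuclideanSpace ℝ (Fin d)) (η₁ η₂ : ℝ) (h1 : 0 < η₁) (h2 : 0 < η₂)
    (H Hinv : EuclideanSpace ℝ (Fin n) →L[ℝ] EuclideanSpace ℝ (Fin n))
    (hH : H = (1 / η₁) • (ContinuousLinearMap.adjoint C ∘L C) +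
        (1 / η₂) • (ContinuousLinearMap.adjoint A ∘L A))
    (hinv1 : Hinv ∘L H = ContinuousLinearMap.id ℝ _)
    (hinv2 : H ∘L Hinv = ContinuousLinearMap.id ℝ _)
    (xw : WithLp 2 (EuclideanSpace ℝ (Fin c) × EuclideanSpace ℝ (Fin d)) →
      EuclideanSpace ℝ (Fin n))
    (hxw : xw = fun w => Hinv ((1 / η₁) • ContinuousLinearMap.adjoint C (WithLp.equiv 2 _ w).1 +
        (1 / η₂) • ContinuousLinearMap.adjoint A ((WithLp.equiv 2 _ w).2 + b)))
    (Qt : WithLp 2 (EuclideanSpace ℝ (Fin c) × EuclideanSpace ℝ (Fin d)) → ℝ)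
    (hQt : Qt = fun w => (1 / (2 * η₁)) * ‖C (xw w) - (WithLp.equiv 2 _ w).1‖ ^ 2 +
        (1 / (2 * η₂)) * ‖(WithLp.equiv 2 _ w).2 - A (xw w) + b‖ ^ 2) :
    ∀ w, HasGradientAt Qt
      ((WithLp.equiv 2 (EuclideanSpace ℝ (Fin c) × EuclideanSpace ℝ (Fin d))).symm
        ((1 / η₁) • ((WithLp.equiv 2 _ w).1 - C (xw w)),
         (1 / η₂) • ((WithLp.equiv 2 _ w).2 - (A (xw w) - b)))) w := by
  intro w
  have hEc : True := trivial
  let Ec := EuclideanSpace ℝ (Fin c)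
  let Ed := EuclideanSpace ℝ (Fin d)
  let En := EuclideanSpace ℝ (Fin n)
  let W := WithLp 2 (Ec × Ed)
  let e : W ≃L[ℝ] Ec × Ed := WithLp.prodContinuousLinearEquiv 2 ℝ Ec Ed
  let P₁ : W →L[ℝ] Ec := (ContinuousLinearMap.fst ℝ Ec Ed) ∘L (e : W →L[ℝ] Ec × Ed)
  let P₂ : W →L[ℝ] Ed := (ContinuousLinearMap.snd ℝ Ec Ed) ∘L (e : W →L[ℝ] Ec × Ed)
  have hP₁app : ∀ v : W, P₁ v = (WithLp.equiv 2 (Ec × Ed) v).1 := fun _ => rfl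
  have hP₂app : ∀ v : W, P₂ v = (WithLp.equiv 2 (Ec × Ed) v).2 := fun _ => rfl
  set S : W →L[ℝ] En := Hinv ∘L ((1 / η₁) • (ContinuousLinearMap.adjoint C ∘L P₁) +
      (1 / η₂) • (ContinuousLinearMap.adjoint A ∘L P₂)) with hS
  set x₀ : En := (1 / η₂) • Hinv (ContinuousLinearMap.adjoint A b) with hx₀
  have hx : ∀ v : W, xw v = S v + x₀ := by
    intro v
    simp only [hxw, hS, hx₀, ContinuousLinearMap.comp_apply, ContinuousLinearMap.add_apply,
      ContinuousLinearMap.smul_apply, map_add, map_smul, hP₁app, hP₂app]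
    module
  have hxwfd : HasFDerivAt xw S w := by
    have h0 : HasFDerivAt (fun v : W => S v + x₀) S w := (S.hasFDerivAt).add_const x₀
    exact h0.congr_of_eventuallyEq (Filter.Eventually.of_forall hx)
  -- residuals
  set r₁ : Ec := C (xw w) - P₁ w with hr₁
  set r₂ : Ed := P₂ w - A (xw w) + b with hr₂
  -- stationarity
  have key : (1 / η₁) • ContinuousLinearMap.adjoint C r₁ =
      (1 / η₂) • ContinuousLinearMap.adjoint A r₂ := by
    have hHx : H (xw w) = (1 / η₁) • ContinuousLinearMap.adjoint C (P₁ w) +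
        (1 / η₂) • ContinuousLinearMap.adjoint A (P₂ w + b) := by
      conv_lhs => rw [hxw]
      have h2' := congrFun (congrArg (fun T : En →L[ℝ] En => (T : En → En)) hinv2)
        ((1 / η₁) • ContinuousLinearMap.adjoint C (P₁ w) +
          (1 / η₂) • ContinuousLinearMap.adjoint A (P₂ w + b))
      exact h2'
    have hHx2 : H (xw w) = (1 / η₁) • ContinuousLinearMap.adjoint C (C (xw w)) +
        (1 / η₂) • ContinuousLinearMap.adjoint A (A (xw w)) := by
      rw [hH]; rfl
    have hst := hHx2.symm.trans hHx
    rw [hr₁, hr₂]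
    simp only [map_add, map_sub, smul_add, smul_sub] at hst ⊢
    linear_combination (norm := module) hst
  -- the two affine maps
  set T₁ : W →L[ℝ] Ec := C ∘L S - P₁ with hT₁
  set T₂ : W →L[ℝ] Ed := P₂ - A ∘L S with hT₂
  have hF₁ : HasFDerivAt (fun v : W => C (xw v) - P₁ v) T₁ w :=
    ((C.hasFDerivAt.comp w hxwfd).sub (P₁.hasFDerivAt))
  have hF₂ : HasFDerivAt (fun v : W => P₂ v - A (xw v) + b) T₂ w :=
    ((P₂.hasFDerivAt.sub (A.hasFDerivAt.comp w hxwfd)).add_const b)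
  have hN₁ : HasFDerivAt (fun v : W => ‖C (xw v) - P₁ v‖ ^ 2)
      ((fderivInnerCLM ℝ (r₁, r₁)).comp (T₁.prod T₁)) w := by
    exact (hF₁.inner (𝕜 := ℝ) hF₁).congr_of_eventuallyEq
      (Filter.Eventually.of_forall fun v => (real_inner_self_eq_norm_sq _).symm)
  have hN₂ : HasFDerivAt (fun v : W => ‖P₂ v - A (xw v) + b‖ ^ 2)
      ((fderivInnerCLM ℝ (r₂, r₂)).comp (T₂.prod T₂)) w := by
    exact (hF₂.inner (𝕜 := ℝ) hF₂).congr_of_eventuallyEq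
      (Filter.Eventually.of_forall fun v => (real_inner_self_eq_norm_sq _).symm)
  have hQfd : HasFDerivAt Qt
      ((1 / (2 * η₁)) • ((fderivInnerCLM ℝ (r₁, r₁)).comp (T₁.prod T₁)) +
       (1 / (2 * η₂)) • ((fderivInnerCLM ℝ (r₂, r₂)).comp (T₂.prod T₂))) w := by
    rw [hQt]
    exact (hN₁.const_mul _).add (hN₂.const_mul _)
  rw [hasGradientAt_iff_hasFDerivAt]
  have hDeq : (InnerProductSpace.toDual ℝ (WithLp 2 (EuclideanSpace ℝ (Fin c) × EuclideanSpace ℝ (Fin d))))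
      ((WithLp.equiv 2 (EuclideanSpace ℝ (Fin c) × EuclideanSpace ℝ (Fin d))).symm
        ((1 / η₁) • ((WithLp.equiv 2 _ w).1 - C (xw w)),
         (1 / η₂) • ((WithLp.equiv 2 _ w).2 - (A (xw w) - b)))) =
      ((1 / (2 * η₁)) • ((fderivInnerCLM ℝ (r₁, r₁)).comp (T₁.prod T₁)) +
       (1 / (2 * η₂)) • ((fderivInnerCLM ℝ (r₂, r₂)).comp (T₂.prod T₂))) := by
    refine ContinuousLinearMap.ext fun v => ?_
    simp only [InnerProductSpace.toDual_apply_apply, ContinuousLinearMap.add_apply,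
      ContinuousLinearMap.smul_apply, ContinuousLinearMap.comp_apply,
      ContinuousLinearMap.prod_apply, fderivInnerCLM_apply, smul_eq_mul]
    have hinner : (inner ℝ ((WithLp.equiv 2 (EuclideanSpace ℝ (Fin c) × EuclideanSpace ℝ (Fin d))).symm
        ((1 / η₁) • ((WithLp.equiv 2 _ w).1 - C (xw w)),
         (1 / η₂) • ((WithLp.equiv 2 _ w).2 - (A (xw w) - b)))) v : ℝ) =
        inner ℝ ((1 / η₁) • (P₁ w - C (xw w))) (P₁ v) +
        inner ℝ ((1 / η₂) • (P₂ w - (A (xw w) - b))) (P₂ v) := by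
      rw [WithLp.prod_inner_apply]
      rfl
    rw [hinner]
    have hT₁v : T₁ v = C (S v) - P₁ v := rfl
    have hT₂v : T₂ v = P₂ v - A (S v) := rfl
    have hcross : (inner ℝ r₁ (C (S v)) : ℝ) * (1 / η₁) = (inner ℝ r₂ (A (S v)) : ℝ) * (1 / η₂) := by
      have hk : (inner ℝ ((1 / η₁) • ContinuousLinearMap.adjoint C r₁) (S v) : ℝ) =
          (inner ℝ ((1 / η₂) • ContinuousLinearMap.adjoint A r₂) (S v) : ℝ) := by rw [key]
      rw [real_inner_smul_left, real_inner_smul_left,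
        ContinuousLinearMap.adjoint_inner_left, ContinuousLinearMap.adjoint_inner_left] at hk
      linarith
    have e1 : (inner ℝ ((1 / η₁) • (P₁ w - C (xw w))) (P₁ v) : ℝ) =
        (1 / η₁) * (- inner ℝ r₁ (P₁ v)) := by
      rw [real_inner_smul_left,
        show P₁ w - C (xw w) = -(C (xw w) - P₁ w) by abel, inner_neg_left]
    have e2 : (inner ℝ ((1 / η₂) • (P₂ w - (A (xw w) - b))) (P₂ v) : ℝ) =
        (1 / η₂) * inner ℝ r₂ (P₂ v) := by
      rw [real_inner_smul_left]
      congr 2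
      rw [hr₂]
      abel
    rw [e1, e2, hT₁v, hT₂v]
    rw [show (inner ℝ (C (S v) - P₁ v) r₁ : ℝ) = inner ℝ r₁ (C (S v) - P₁ v) from
        real_inner_comm _ _,
      show (inner ℝ (P₂ v - A (S v)) r₂ : ℝ) = inner ℝ r₂ (P₂ v - A (S v)) from
        real_inner_comm _ _]
    rw [inner_sub_right r₁ (C (S v)) (P₁ v), inner_sub_right r₂ (P₂ v) (A (S v))]
    have hη1 : η₁ ≠ 0 := ne_of_gt h1
    have hη2 : η₂ ≠ 0 := ne_of_gt h2
    generalize (inner ℝ r₁ (C (S v)) : ℝ) = a at hcross ⊢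
    generalize (inner ℝ r₁ (P₁ v) : ℝ) = a2
    generalize (inner ℝ r₂ (P₂ v) : ℝ) = a3
    generalize (inner ℝ r₂ (A (S v)) : ℝ) = a4 at hcross ⊢
    field_simp at hcross ⊢
    linear_combination (-2) * hcross
  rw [hDeq]
  exact hQfd
end

section
/- Distance to the ℓ0 ball: for z ∈ ℝⁿ and integer τ with 0 ≤ τ ≤ n, the squared Euclidean distance from z to the set {x : ‖x‖₀ ≤ τ} equals the sum of the squares of the n − τ smallest-magnitude entries of z. -/
lemma aux_le_apply {m n : ℕ} (f : Fin m → Fin n) (hf : StrictMono f) (k : Fin m) :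
    (k : ℕ) ≤ (f k : ℕ) := by
  obtain ⟨k, hk⟩ := k
  induction k with
  | zero => exact Nat.zero_le _
  | succ i ih =>
      have h1 := ih (Nat.lt_of_succ_lt hk)
      have h2 : f ⟨i, Nat.lt_of_succ_lt hk⟩ < f ⟨i + 1, hk⟩ :=
        hf (by simp [Fin.lt_def])
      rw [Fin.lt_def] at h2
      simp only [Fin.val_mk] at h1 h2 ⊢
      omega

lemma aux_ub {m n : ℕ} (f : Fin m → Fin n) (hf : StrictMono f) (k : Fin m) :
    (f k : ℕ) ≤ n - m + k := by
  have hF : StrictMono (fun k : Fin m => (f k.rev).rev) := by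
    intro a b hab
    simp only [Fin.rev_lt_rev]
    exact hf (by simpa using Fin.rev_lt_rev.mpr hab)
  have := aux_le_apply _ hF k.rev
  simp only [Fin.rev_rev, Fin.val_rev] at this
  have h1 := (f k).isLt
  have h2 := k.isLt
  omega

lemma aux_key {n τ : ℕ} (w : Fin n → ℝ) (hw : ∀ i, 0 ≤ w i)
    (hanti : ∀ i j : Fin n, i ≤ j → w j ≤ w i) (T : Finset (Fin n))
    (hT : n - τ ≤ T.card) :
    ∑ j ∈ Finset.univ.filter (fun j : Fin n => τ ≤ (j : ℕ)), w j ≤ ∑ t ∈ T, w t := by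
  set m := T.card with hm
  have hmn : m ≤ n := by simpa using Finset.card_le_univ T
  set g : Fin m ↪o Fin n := T.orderEmbOfFin hm.symm with hg
  set A : Finset (Fin n) := Finset.univ.filter (fun j : Fin n => τ ≤ (j : ℕ)) with hA
  have hmem : ∀ j ∈ A, τ ≤ (j : ℕ) := by
    intro j hj; simpa [hA] using hj
  have hidx : ∀ j : Fin n, τ ≤ (j : ℕ) → (j : ℕ) - (n - m) < m := by
    intro j hj; have := j.isLt; omega
  set F : (j : Fin n) → j ∈ A → Fin n := fun j hj => g ⟨(j : ℕ) - (n - m), hidx j (hmem j hj)⟩ with hF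
  have hub : ∀ j (hj : j ∈ A), ((F j hj : Fin n) : ℕ) ≤ (j : ℕ) := by
    intro j hj
    have := aux_ub (fun k => g k) g.strictMono ⟨(j : ℕ) - (n - m), hidx j (hmem j hj)⟩
    have h2 := hmem j hj
    simp only [Fin.val_mk] at this
    simp only [hF]
    omega
  calc ∑ j ∈ A, w j ≤ ∑ j ∈ A.attach, w (F j.1 j.2) := by
        rw [← Finset.sum_attach A w]
        apply Finset.sum_le_sum
        intro j _
        exact hanti _ _ (by rw [Fin.le_def]; exact hub j.1 j.2)
    _ = ∑ t ∈ A.attach.image (fun j => F j.1 j.2), w t := by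
        rw [Finset.sum_image]
        intro a _ b _ hab
        simp only [hF] at hab
        have := g.injective hab
        have h3 := Fin.mk.injEq _ _ _ _ ▸ this
        have ha := hmem a.1 a.2
        have hb := hmem b.1 b.2
        have h4 : ((a.1 : Fin n) : ℕ) - (n - m) = ((b.1 : Fin n) : ℕ) - (n - m) := by
          simpa using this
        have : ((a.1 : Fin n) : ℕ) = ((b.1 : Fin n) : ℕ) := by omega
        exact Subtype.ext (Fin.ext this)
    _ ≤ ∑ t ∈ T, w t := by
        apply Finset.sum_le_sum_of_subset_of_nonneg
        · intro t ht
          simp only [Finset.mem_image] at ht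
          obtain ⟨j, _, rfl⟩ := ht
          exact Finset.orderEmbOfFin_mem T hm.symm _
        · intro i _ _; exact hw i

/-- The squared Euclidean distance from z to the ℓ0 ball of radius τ equals the sum of
squares of the n − τ smallest-magnitude entries of z. -/
theorem l0_ball_distance (n τ : ℕ) (hτ : τ ≤ n) (z : Fin n → ℝ) (e : Equiv.Perm (Fin n))
    (hsort : ∀ i j : Fin n, i ≤ j → |z (e j)| ≤ |z (e i)|) :
    IsLeast {s : ℝ | ∃ x : Fin n → ℝ, ({i | x i ≠ 0} : Set (Fin n)).ncard ≤ τ ∧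
        s = ∑ i, (x i - z i) ^ 2}
      (∑ i ∈ Finset.univ.filter (fun i : Fin n => τ ≤ (i : ℕ)), (z (e i)) ^ 2) := by
  constructor
  · -- membership
    refine ⟨fun i => if ((e.symm i : Fin n) : ℕ) < τ then z i else 0, ?_, ?_⟩
    · have hsub : ({i | (fun i => if ((e.symm i : Fin n) : ℕ) < τ then z i else 0) i ≠ 0} : Set (Fin n))
          ⊆ {i : Fin n | ((e.symm i : Fin n) : ℕ) < τ} := by
        intro i hi
        simp only [Set.mem_setOf_eq] at hi ⊢
        by_contra h
        simp [h] at hi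
      have h1 : ({i : Fin n | ((e.symm i : Fin n) : ℕ) < τ}).ncard ≤ τ := by
        rw [Set.ncard_eq_toFinset_card', Set.toFinset_setOf]
        calc (Finset.univ.filter fun i : Fin n => ((e.symm i : Fin n) : ℕ) < τ).card
            ≤ (Finset.range τ).card := by
              apply Finset.card_le_card_of_injOn (fun i => ((e.symm i : Fin n) : ℕ))
              · intro i hi
                simp only [Finset.mem_coe, Finset.mem_filter] at hi
                simpa using hi.2
              · intro a _ b _ hab
                exact e.symm.injective (Fin.ext hab)
          _ = τ := Finset.card_range τ
      exact le_trans (Set.ncard_le_ncard hsub (Set.toFinite _)) h1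
    · have h2 : ∀ i : Fin n,
          ((if ((e.symm i : Fin n) : ℕ) < τ then z i else 0) - z i) ^ 2
            = if ((e.symm i : Fin n) : ℕ) < τ then 0 else z i ^ 2 := by
        intro i
        by_cases h : ((e.symm i : Fin n) : ℕ) < τ <;> simp [h]
      rw [Finset.sum_filter]
      rw [← Equiv.sum_comp e (fun i => ((if ((e.symm i : Fin n) : ℕ) < τ then z i else 0) - z i) ^ 2)]
      apply Finset.sum_congr rfl
      intro j _
      rw [h2 (e j)]
      simp only [Equiv.symm_apply_apply]
      by_cases h : τ ≤ (j : ℕ)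
      · simp [h, Nat.not_lt.mpr h]
      · simp [h, Nat.lt_of_not_le h]
  · -- lower bound
    rintro s ⟨x, hx, rfl⟩
    set Z := Finset.univ.filter (fun i : Fin n => x i = 0) with hZ
    have hsupp : (Finset.univ.filter fun i : Fin n => x i ≠ 0).card ≤ τ := by
      rw [← Set.toFinset_setOf, ← Set.ncard_eq_toFinset_card']
      exact hx
    have hZcard : n - τ ≤ Z.card := by
      have h4 : Z.card + (Finset.univ.filter fun i : Fin n => ¬ x i = 0).card = n := by
        rw [hZ]
        simpa using Finset.card_filter_add_card_filter_not (s := Finset.univ)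
          (p := fun i : Fin n => x i = 0)
      have h3 : (Finset.univ.filter fun i : Fin n => ¬ x i = 0).card ≤ τ := hsupp
      omega
    set T := Z.image e.symm with hT
    have hTcard : n - τ ≤ T.card := by
      rw [hT, Finset.card_image_of_injective _ e.symm.injective]
      exact hZcard
    have hanti : ∀ i j : Fin n, i ≤ j → (z (e j)) ^ 2 ≤ (z (e i)) ^ 2 := by
      intro i j hij
      rw [← sq_abs (z (e j)), ← sq_abs (z (e i))]
      exact pow_le_pow_left₀ (abs_nonneg _) (hsort i j hij) 2
    calc ∑ i ∈ Finset.univ.filter (fun i : Fin n => τ ≤ (i : ℕ)), (z (e i)) ^ 2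
        ≤ ∑ t ∈ T, (z (e t)) ^ 2 :=
          aux_key _ (fun i => sq_nonneg _) hanti T hTcard
      _ = ∑ i ∈ Z, (z i) ^ 2 := by
          rw [hT, Finset.sum_image (fun a _ b _ h => e.symm.injective h)]
          apply Finset.sum_congr rfl
          intro i _
          rw [Equiv.apply_symm_apply]
      _ = ∑ i ∈ Z, (x i - z i) ^ 2 := by
          apply Finset.sum_congr rfl
          intro i hi
          rw [hZ, Finset.mem_filter] at hi
          rw [hi.2]
          ring
      _ ≤ ∑ i, (x i - z i) ^ 2 := by
          apply Finset.sum_le_sum_of_subset_of_nonneg (Finset.subset_univ Z)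
          intro i _ _
          exact sq_nonneg _
end
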